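/- Let d ≥ 1 be an integer, ν ∈ (0,1], and let 𝒜, ℬ be nonempty compact metric spaces. Let a : 𝒜 × ℬ → ℝ^{d×d} and f : 𝒜 × ℬ → ℝ be continuous, and suppose that for every (α,β) the matrix a(α,β) has tr a(α,β) > 0 and satisfies the Cordes condition |a(α,β)|² ≤ (tr a(α,β))²/(d−1+ν). Set γ(α,β) := tr a(α,β)/|a(α,β)|² and, for a real d×d matrix M, define F_γ(M) := inf_{α∈𝒜} sup_{β∈ℬ} [γ(α,β)·(a(α,β):M − f(α,β))]. Then for all real d×d matrices M and N, |F_γ(N) − F_γ(M) − tr(N − M)| ≤ √(1−ν)·|N − M|. -/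

import Mathlib

open Finset

lemma sum_sq_pos_of_trace_ne {d : ℕ} (A : Matrix (Fin d) (Fin d) ℝ) (htr : A.trace ≠ 0) :
    0 < ∑ i, ∑ j, (A i j) ^ 2 := by
  rcases lt_or_eq_of_le (Finset.sum_nonneg fun i _ => Finset.sum_nonneg fun j _ => sq_nonneg (A i j)) with h | h
  · exact h
  · exfalso
    apply htr
    have hz : ∀ i ∈ (univ : Finset (Fin d)), ∑ j, (A i j)^2 = 0 := by
      intro i hi
      have := (Finset.sum_eq_zero_iff_of_nonneg
        (fun i _ => Finset.sum_nonneg fun j _ => sq_nonneg (A i j))).mp h.symm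
      exact this i hi
    have hz2 : ∀ i j, A i j = 0 := by
      intro i j
      have := (Finset.sum_eq_zero_iff_of_nonneg (fun j _ => sq_nonneg (A i j))).mp
        (hz i (mem_univ i)) j (mem_univ j)
      exact pow_eq_zero_iff (two_ne_zero) |>.mp this
    rw [Matrix.trace]
    simp [Matrix.diag, hz2]

lemma cordes_pointwise {d : ℕ} (hd : 1 ≤ d) {ν : ℝ} (hν0 : 0 < ν) (hν1 : ν ≤ 1)
    (A E : Matrix (Fin d) (Fin d) ℝ) (htr : 0 < A.trace)
    (hc : (∑ i, ∑ j, (A i j) ^ 2) ≤ A.trace ^ 2 / ((d : ℝ) - 1 + ν)) :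
    |(A.trace / ∑ i, ∑ j, (A i j) ^ 2) * (∑ i, ∑ j, A i j * E i j) - E.trace|
      ≤ Real.sqrt (1 - ν) * Real.sqrt (∑ i, ∑ j, (E i j) ^ 2) := by
  set S := ∑ i, ∑ j, (A i j) ^ 2 with hSdef
  set T := A.trace with hTdef
  have hS : 0 < S := sum_sq_pos_of_trace_ne A htr.ne'
  set c := T / S with hcdef
  have hdn : (0:ℝ) < (d : ℝ) - 1 + ν := by
    have : (1:ℝ) ≤ (d:ℝ) := by exact_mod_cast hd
    linarith
  -- key identity
  have hid : c * (∑ i, ∑ j, A i j * E i j) - E.trace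
      = ∑ i, ∑ j, (c * A i j - (if i = j then (1:ℝ) else 0)) * E i j := by
    rw [Matrix.trace]
    simp only [Matrix.diag, Finset.mul_sum, sub_mul, ite_mul, one_mul, zero_mul,
      Finset.sum_sub_distrib, mul_assoc]
    congr 1
    symm
    refine Finset.sum_congr rfl fun i _ => ?_
    simp
  -- norm of cA - I
  have hnorm : (∑ i, ∑ j, (c * A i j - (if i = j then (1:ℝ) else 0)) ^ 2)
      = c ^ 2 * S - 2 * c * T + d := by
    have expand : ∀ i j : Fin d, (c * A i j - (if i = j then (1:ℝ) else 0)) ^ 2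
        = c ^ 2 * (A i j) ^ 2 - 2 * c * ((if i = j then (1:ℝ) else 0) * A i j)
          + (if i = j then (1:ℝ) else 0) := by
      intro i j
      by_cases h : i = j <;> simp [h] <;> ring
    rw [Finset.sum_congr rfl fun i _ => Finset.sum_congr rfl fun j _ => expand i j]
    simp only [Finset.sum_add_distrib, Finset.sum_sub_distrib, ← Finset.mul_sum]
    have h1 : ∑ i : Fin d, ∑ j : Fin d, (if i = j then (1:ℝ) else 0) * A i j = T := by
      rw [hTdef, Matrix.trace]
      simp [Matrix.diag]
    have h2 : ∑ i : Fin d, ∑ j : Fin d, (if i = j then (1:ℝ) else 0) = (d : ℝ) := by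
      simp
    rw [h1, h2]
  have hTS : (d:ℝ) - 1 + ν ≤ T ^ 2 / S := by
    rw [le_div_iff₀ hS]
    calc ((d:ℝ) - 1 + ν) * S ≤ ((d:ℝ) - 1 + ν) * (T ^ 2 / ((d : ℝ) - 1 + ν)) :=
          mul_le_mul_of_nonneg_left hc hdn.le
      _ = T ^ 2 := by field_simp
  have hnb : (∑ i, ∑ j, (c * A i j - (if i = j then (1:ℝ) else 0)) ^ 2) ≤ 1 - ν := by
    rw [hnorm, hcdef]
    have : (T / S) ^ 2 * S - 2 * (T / S) * T = -(T ^ 2 / S) := by field_simp; ring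
    rw [this]
    linarith
  -- Cauchy-Schwarz
  have hCS : (c * (∑ i, ∑ j, A i j * E i j) - E.trace) ^ 2
      ≤ (1 - ν) * (∑ i, ∑ j, (E i j) ^ 2) := by
    rw [hid]
    have := Finset.sum_mul_sq_le_sq_mul_sq (univ ×ˢ univ)
      (fun p : Fin d × Fin d => c * A p.1 p.2 - (if p.1 = p.2 then (1:ℝ) else 0))
      (fun p : Fin d × Fin d => E p.1 p.2)
    rw [Finset.sum_product, Finset.sum_product, Finset.sum_product] at this
    calc (∑ i, ∑ j, (c * A i j - (if i = j then (1:ℝ) else 0)) * E i j) ^ 2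
        ≤ (∑ i, ∑ j, (c * A i j - (if i = j then (1:ℝ) else 0)) ^ 2)
            * (∑ i, ∑ j, (E i j) ^ 2) := this
      _ ≤ (1 - ν) * (∑ i, ∑ j, (E i j) ^ 2) :=
          mul_le_mul_of_nonneg_right hnb
            (Finset.sum_nonneg fun i _ => Finset.sum_nonneg fun j _ => sq_nonneg _)
  calc |c * (∑ i, ∑ j, A i j * E i j) - E.trace|
      = Real.sqrt ((c * (∑ i, ∑ j, A i j * E i j) - E.trace) ^ 2) :=
        (Real.sqrt_sq_eq_abs _).symm
    _ ≤ Real.sqrt ((1 - ν) * (∑ i, ∑ j, (E i j) ^ 2)) := Real.sqrt_le_sqrt hCS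
    _ = Real.sqrt (1 - ν) * Real.sqrt (∑ i, ∑ j, (E i j) ^ 2) :=
        Real.sqrt_mul (by linarith) _

lemma infSup_le_infSup_add {𝒜 ℬ : Type*} [Nonempty 𝒜] [Nonempty ℬ]
    (g h : 𝒜 → ℬ → ℝ) (c : ℝ)
    (hbh : ∀ α, BddAbove (Set.range (h α)))
    (hbg : BddBelow (Set.range fun α => ⨆ β, g α β))
    (hle : ∀ α β, g α β ≤ h α β + c) :
    (⨅ α, ⨆ β, g α β) ≤ (⨅ α, ⨆ β, h α β) + c := by
  rw [← sub_le_iff_le_add]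
  apply le_ciInf
  intro α
  rw [sub_le_iff_le_add]
  calc (⨅ α, ⨆ β, g α β) ≤ ⨆ β, g α β := ciInf_le hbg α
    _ ≤ (⨆ β, h α β) + c :=
        ciSup_le fun β => (hle α β).trans (add_le_add (le_ciSup (hbh α) β) le_rfl)



/-- **Pointwise Cordes estimate for the renormalized Isaacs operator.**
Let `d ≥ 1`, `ν ∈ (0,1]`, and let `𝒜`, `ℬ` be nonempty compact metric spaces. Let
`a : 𝒜 × ℬ → ℝ^{d×d}` and `f : 𝒜 × ℬ → ℝ` be continuous, with each `a(α,β)` having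
positive trace and satisfying the Cordes condition `|a(α,β)|² ≤ (tr a(α,β))²/(d−1+ν)`.
With `γ(α,β) := tr a(α,β)/|a(α,β)|²` and
`F_γ(M) := inf_α sup_β [γ(α,β)·(a(α,β):M − f(α,β))]`, we have for all matrices `M`, `N`:
`|F_γ(N) − F_γ(M) − tr(N − M)| ≤ √(1−ν)·|N − M|` (Frobenius norm). -/
theorem cordes_estimate_isaacs (d : ℕ) (hd : 1 ≤ d) (ν : ℝ) (hν0 : 0 < ν) (hν1 : ν ≤ 1)
    {𝒜 ℬ : Type*} [MetricSpace 𝒜] [CompactSpace 𝒜] [Nonempty 𝒜]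
    [MetricSpace ℬ] [CompactSpace ℬ] [Nonempty ℬ]
    (a : 𝒜 → ℬ → Matrix (Fin d) (Fin d) ℝ) (f : 𝒜 → ℬ → ℝ)
    (ha : Continuous fun p : 𝒜 × ℬ => a p.1 p.2)
    (hf : Continuous fun p : 𝒜 × ℬ => f p.1 p.2)
    (htr : ∀ α β, 0 < Matrix.trace (a α β))
    (hcordes : ∀ α β,
      (∑ i, ∑ j, (a α β i j) ^ 2) ≤ (Matrix.trace (a α β)) ^ 2 / ((d : ℝ) - 1 + ν))
    (Fγ : Matrix (Fin d) (Fin d) ℝ → ℝ)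
    (hFγ : ∀ M, Fγ M = ⨅ α : 𝒜, ⨆ β : ℬ,
      (Matrix.trace (a α β) / (∑ i, ∑ j, (a α β i j) ^ 2)) *
        ((∑ i, ∑ j, a α β i j * M i j) - f α β)) :
    ∀ M N : Matrix (Fin d) (Fin d) ℝ,
      |Fγ N - Fγ M - Matrix.trace (N - M)|
        ≤ Real.sqrt (1 - ν) * Real.sqrt (∑ i, ∑ j, ((N - M) i j) ^ 2) := by
  intro M N
  have haij : ∀ i j, Continuous fun p : 𝒜 × ℬ => a p.1 p.2 i j :=
    fun i j => (continuous_apply j).comp ((continuous_apply i).comp ha)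
  have hScont : Continuous fun p : 𝒜 × ℬ => ∑ i, ∑ j, (a p.1 p.2 i j) ^ 2 :=
    continuous_finset_sum _ fun i _ =>
      continuous_finset_sum _ fun j _ => (haij i j).pow 2
  have htrcont : Continuous fun p : 𝒜 × ℬ => (a p.1 p.2).trace := by
    simp only [Matrix.trace, Matrix.diag]
    exact continuous_finset_sum _ fun i _ => haij i i
  have hSpos : ∀ α β, 0 < ∑ i, ∑ j, (a α β i j) ^ 2 :=
    fun α β => sum_sq_pos_of_trace_ne _ (htr α β).ne'
  set K := Real.sqrt (1 - ν) * Real.sqrt (∑ i, ∑ j, ((N - M) i j) ^ 2) with hK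
  set g : Matrix (Fin d) (Fin d) ℝ → 𝒜 → ℬ → ℝ := fun X α β =>
    ((a α β).trace / ∑ i, ∑ j, (a α β i j) ^ 2) *
      ((∑ i, ∑ j, a α β i j * X i j) - f α β) with hg
  have gcont : ∀ X, Continuous fun p : 𝒜 × ℬ => g X p.1 p.2 := by
    intro X
    exact (htrcont.div hScont fun p => (hSpos p.1 p.2).ne').mul
      ((continuous_finset_sum _ fun i _ => continuous_finset_sum _ fun j _ =>
        (haij i j).mul continuous_const).sub hf)
  have hbA : ∀ X α, BddAbove (Set.range (g X α)) := fun X α =>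
    (isCompact_range ((gcont X).comp (Continuous.prodMk_right α))).bddAbove
  have hbB : ∀ X, BddBelow (Set.range fun α => ⨆ β, g X α β) := by
    intro X
    obtain ⟨m, hm⟩ := (isCompact_range (gcont X)).bddBelow
    refine ⟨m, ?_⟩
    rintro x ⟨α, rfl⟩
    obtain ⟨β⟩ := (inferInstance : Nonempty ℬ)
    exact le_trans (hm ⟨(α, β), rfl⟩) (le_ciSup (hbA X α) β)
  have key : ∀ α β, |g N α β - g M α β - (N - M).trace| ≤ K := by
    intro α β
    have h1 := cordes_pointwise hd hν0 hν1 (a α β) (N - M) (htr α β) (hcordes α β)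
    have h2 : g N α β - g M α β =
        ((a α β).trace / ∑ i, ∑ j, (a α β i j) ^ 2) *
          (∑ i, ∑ j, a α β i j * (N - M) i j) := by
      simp only [hg, Matrix.sub_apply, mul_sub, Finset.sum_sub_distrib]
      ring
    rw [h2]
    exact h1
  have up : (⨅ α, ⨆ β, g N α β) ≤ (⨅ α, ⨆ β, g M α β) + ((N - M).trace + K) :=
    infSup_le_infSup_add (g N) (g M) _ (hbA M) (hbB N) fun α β => by
      have := abs_le.mp (key α β); linarith [this.1, this.2]
  have down : (⨅ α, ⨆ β, g M α β) ≤ (⨅ α, ⨆ β, g N α β) + (K - (N - M).trace) :=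
    infSup_le_infSup_add (g M) (g N) _ (hbA N) (hbB M) fun α β => by
      have := abs_le.mp (key α β); linarith [this.1, this.2]
  have eN : Fγ N = ⨅ α, ⨆ β, g N α β := hFγ N
  have eM : Fγ M = ⨅ α, ⨆ β, g M α β := hFγ M
  rw [abs_le, eN, eM]
  exact ⟨by linarith, by linarith⟩
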